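/- Let K be a field, a, b integers with 2 ≤ a ≤ b, and let p = (c,d) be a pair of integers with 0 < c < a, 0 < d < b and bc + ad = ab (an integer point strictly inside the segment from (a,0) to (0,b)). Let r be the reduction number of I_p = (x^a, y^b, x^c y^d) with respect to J = (x^a, y^b). Then: (a) if a does not divide b, then 2r < a; (b) r ≠ a − 2. -/
import Mathlib


open MvPolynomial

/-- The monomial `x^c y^d` in `K[x,y]`. -/
noncomputable def mono (K : Type*) [Field K] (c d : ℕ) : MvPolynomial (Fin 2) K :=
  X 0 ^ c * X 1 ^ d

/-- The ideal `J = (x^a, y^b)`. -/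
noncomputable def Jab (K : Type*) [Field K] (a b : ℕ) : Ideal (MvPolynomial (Fin 2) K) :=
  Ideal.span {mono K a 0, mono K 0 b}

/-- For `A ⊆ {0,…,g}` with `g = gcd(a,b)`, the ideal `I_A` generated by the
monomials `x^(i·(a/g)) y^(b − i·(b/g))` for `i ∈ A`. -/
noncomputable def IA (K : Type*) [Field K] (a b : ℕ) (A : Finset ℕ) :
    Ideal (MvPolynomial (Fin 2) K) :=
  Ideal.span ((fun i : ℕ =>
    mono K (i * (a / Nat.gcd a b)) (b - i * (b / Nat.gcd a b))) '' (A : Set ℕ))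

/-- The reduction number of `I` with respect to `J = (x^a, y^b)`: the least `r ≥ 0`
with `I^(r+1) = J·I^r`. -/
noncomputable def redNum (K : Type*) [Field K] (a b : ℕ)
    (I : Ideal (MvPolynomial (Fin 2) K)) : ℕ :=
  sInf {r : ℕ | I ^ (r + 1) = Jab K a b * I ^ r}

/-! ### Auxiliary material -/

noncomputable def nuu (c d : ℕ) : Fin 2 →₀ ℕ := Finsupp.single 0 c + Finsupp.single 1 d

lemma nuu_apply0 (c d : ℕ) : nuu c d 0 = c := by
  simp [nuu, Finsupp.single_apply]

lemma nuu_apply1 (c d : ℕ) : nuu c d 1 = d := by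
  simp [nuu, Finsupp.single_apply]

lemma nuu_add (c d c' d' : ℕ) : nuu c d + nuu c' d' = nuu (c + c') (d + d') := by
  simp only [nuu, Finsupp.single_add]; abel

lemma nuu_smul (n c d : ℕ) : n • nuu c d = nuu (n * c) (n * d) := by
  simp [nuu, smul_add, Finsupp.smul_single, smul_eq_mul]

lemma mono_eq (K : Type*) [Field K] (c d : ℕ) :
    mono K c d = monomial (nuu c d) 1 := by
  rw [mono, X_pow_eq_monomial, X_pow_eq_monomial, monomial_mul, one_mul, nuu]

lemma mono_pow (K : Type*) [Field K] (c d n : ℕ) :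
    mono K c d ^ n = mono K (n * c) (n * d) := by
  rw [mono_eq, monomial_pow, one_pow, nuu_smul, mono_eq]

lemma mono_mul (K : Type*) [Field K] (c d c' d' : ℕ) :
    mono K c d * mono K c' d' = mono K (c + c') (d + d') := by
  rw [mono_eq, mono_eq, monomial_mul, one_mul, nuu_add, mono_eq]


lemma gcd_aux (g k : ℕ) (hg : 0 < g) :
    ∃ δ e s : ℕ, 0 < δ ∧ g = δ * e ∧ k = δ * s ∧ Nat.Coprime e s := by
  refine ⟨Nat.gcd g k, g / Nat.gcd g k, k / Nat.gcd g k, Nat.gcd_pos_of_pos_left _ hg,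
    (Nat.mul_div_cancel' (Nat.gcd_dvd_left g k)).symm,
    (Nat.mul_div_cancel' (Nat.gcd_dvd_right g k)).symm,
    Nat.coprime_div_gcd_div_gcd (Nat.gcd_pos_of_pos_left _ hg)⟩

lemma pow_le_sup' {R : Type*} [CommRing R] (J C : Ideal R) (n : ℕ) :
    (J ⊔ C) ^ (n + 1) ≤ J * (J ⊔ C) ^ n ⊔ C ^ (n + 1) := by
  induction n with
  | zero => simp
  | succ n ih =>
    rw [pow_succ]
    refine le_trans (Ideal.mul_mono_left ih) ?_
    rw [Ideal.sup_mul]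
    apply sup_le
    · rw [mul_assoc, ← pow_succ]
      exact le_sup_left
    · rw [Ideal.mul_sup]
      apply sup_le
      · rw [mul_comm]
        exact le_trans (Ideal.mul_mono_right
          (Ideal.pow_right_mono le_sup_right (n + 1))) le_sup_left
      · rw [← pow_succ]
        exact le_sup_right

/-- The generating exponents of `J * I^r`. -/
def Tset (a b c d r : ℕ) : Set (Fin 2 →₀ ℕ) :=
  {v | ∃ i j l : ℕ, i + j + l = r + 1 ∧ 1 ≤ i + j ∧ v = nuu (i * a + l * c) (j * b + l * d)}

lemma JI_le (K : Type*) [Field K] (a b c d r : ℕ) :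
    Jab K a b * (Ideal.span {mono K a 0, mono K 0 b, mono K c d}) ^ r ≤
      Ideal.span ((fun s => monomial s (1 : K)) '' Tset a b c d r) := by
  induction r with
  | zero =>
    rw [pow_zero, mul_one, Jab, Ideal.span_le]
    rintro x hx
    simp only [Set.mem_insert_iff, Set.mem_singleton_iff] at hx
    rcases hx with rfl | rfl
    · rw [mono_eq]
      exact Ideal.subset_span ⟨nuu a 0, ⟨1, 0, 0, by omega, by omega, by norm_num⟩, rfl⟩
    · rw [mono_eq]
      exact Ideal.subset_span ⟨nuu 0 b, ⟨0, 1, 0, by omega, by omega, by norm_num⟩, rfl⟩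
  | succ r ih =>
    have hI : (Ideal.span {mono K a 0, mono K 0 b, mono K c d} : Ideal (MvPolynomial (Fin 2) K)) =
        Ideal.span ((fun s => monomial s (1 : K)) '' {nuu a 0, nuu 0 b, nuu c d}) := by
      rw [Set.image_insert_eq, Set.image_insert_eq, Set.image_singleton]
      simp only [← mono_eq]
    rw [pow_succ, ← mul_assoc]
    refine le_trans (Ideal.mul_mono_left ih) ?_
    rw [hI, Ideal.span_mul_span', Ideal.span_le]
    rintro x hx
    rw [Set.mem_mul] at hx
    obtain ⟨p, hp, q, hq, rfl⟩ := hx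
    obtain ⟨t, ht, rfl⟩ := hp
    obtain ⟨u, hu, rfl⟩ := hq
    obtain ⟨i, j, l, hsum, hij, rfl⟩ := ht
    simp only [monomial_mul, one_mul]
    apply Ideal.subset_span
    simp only [Set.mem_insert_iff, Set.mem_singleton_iff] at hu
    rcases hu with rfl | rfl | rfl
    · exact ⟨_, ⟨i + 1, j, l, by omega, by omega, by rw [nuu_add]; congr 1 <;> ring⟩, rfl⟩
    · exact ⟨_, ⟨i, j + 1, l, by omega, by omega, by rw [nuu_add]; congr 1 <;> ring⟩, rfl⟩
    · exact ⟨_, ⟨i, j, l + 1, by omega, by omega, by rw [nuu_add]; congr 1 <;> ring⟩, rfl⟩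

theorem stmt10 (K : Type*) [Field K] (a b c d : ℕ) (ha : 2 ≤ a) (hab : a ≤ b)
    (hc : 0 < c) (hca : c < a) (hd : 0 < d) (hdb : d < b)
    (h : b * c + a * d = a * b) :
    (¬ a ∣ b →
        2 * redNum K a b (Ideal.span {mono K a 0, mono K 0 b, mono K c d}) < a)
    ∧ redNum K a b (Ideal.span {mono K a 0, mono K 0 b, mono K c d}) ≠ a - 2 := by
  set I : Ideal (MvPolynomial (Fin 2) K) :=
    Ideal.span {mono K a 0, mono K 0 b, mono K c d} with hIdef
  have ha0 : 0 < a := by omega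
  have hb0 : 0 < b := by omega
  obtain ⟨g, a', b', hgpos, ha', hb', cop⟩ := gcd_aux a b ha0
  have hga : g ∣ a := ⟨a', ha'⟩
  have hgb : g ∣ b := ⟨b', hb'⟩
  have ha'pos : 0 < a' := by
    rcases Nat.eq_zero_or_pos a' with h0 | h0
    · rw [h0, mul_zero] at ha'; omega
    · exact h0
  have hb'pos : 0 < b' := by
    rcases Nat.eq_zero_or_pos b' with h0 | h0
    · rw [h0, mul_zero] at hb'; omega
    · exact h0
  -- a' ∣ c
  have hdvd : a ∣ b * c := by
    have h1 : a ∣ a * b - a * d := Nat.dvd_sub (dvd_mul_right a b) (dvd_mul_right a d)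
    have h2 : a * b - a * d = b * c := by omega
    rwa [h2] at h1
  have ha'c : a' ∣ c := by
    have h1 : g * a' ∣ g * (b' * c) := by
      rw [← ha']
      have : g * (b' * c) = b * c := by rw [hb']; ring
      rw [this]; exact hdvd
    have h2 : a' ∣ c * b' := by
      rw [mul_comm c b']
      exact (mul_dvd_mul_iff_left (a := g) (by omega)).mp h1
    exact Nat.Coprime.dvd_of_dvd_mul_right cop h2
  obtain ⟨k, hk⟩ := ha'c
  have hk1 : 1 ≤ k := by
    rcases Nat.eq_zero_or_pos k with h0 | h0
    · rw [h0, mul_zero] at hk; omega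
    · exact h0
  have hkg : k < g := by
    have : a' * k < a' * g := by
      rw [← hk]
      calc c < a := hca
      _ = a' * g := by rw [ha']; ring
    exact Nat.lt_of_mul_lt_mul_left this
  -- d = (g - k) * b'
  have h1 : k * b' + d = g * b' := by
    have h2 : a * (k * b' + d) = a * (g * b') := by
      calc a * (k * b' + d) = b * c + a * d := by rw [ha', hb', hk]; ring
      _ = a * b := h
      _ = a * (g * b') := by rw [hb']
    exact Nat.eq_of_mul_eq_mul_left ha0 h2
  have hd' : d = (g - k) * b' := by
    rw [Nat.sub_mul]; omega
  -- e, s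
  obtain ⟨δ, e, s, hδpos, he, hs, cop_es⟩ := gcd_aux g k hgpos
  have hs1 : 1 ≤ s := by
    rcases Nat.eq_zero_or_pos s with h0 | h0
    · rw [h0, mul_zero] at hs; omega
    · exact h0
  have hse : s < e := by
    have : δ * s < δ * e := by rw [← hs, ← he]; omega
    exact Nat.lt_of_mul_lt_mul_left this
  have he2 : 2 ≤ e := by omega
  have hec : e * c = s * a := by rw [hk, ha', he, hs]; ring
  have hgk : g - k = (e - s) * δ := by
    rw [Nat.sub_mul, he, hs, mul_comm δ e, mul_comm δ s]
  have hed : e * d = (e - s) * b := by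
    rw [hd', hgk, hb', he]; ring
  have hmin : ∀ m : ℕ, 0 < m → g ∣ m * k → e ≤ m := by
    intro m hm hdv
    have h1 : δ * e ∣ δ * (m * s) := by
      rw [← he]
      have : δ * (m * s) = m * k := by rw [hs]; ring
      rw [this]; exact hdv
    have h2 : e ∣ m * s := (mul_dvd_mul_iff_left (a := δ) (by omega)).mp h1
    exact Nat.le_of_dvd hm (Nat.Coprime.dvd_of_dvd_mul_right cop_es h2)
  -- basic ideal facts
  have hmaI : mono K a 0 ∈ I := Ideal.subset_span (by simp)
  have hmbI : mono K 0 b ∈ I := Ideal.subset_span (by simp)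
  have hmcdI : mono K c d ∈ I := Ideal.subset_span (by simp)
  have hJI : Jab K a b ≤ I := by
    rw [Jab, Ideal.span_le]
    rintro x hx
    simp only [Set.mem_insert_iff, Set.mem_singleton_iff] at hx
    rcases hx with rfl | rfl
    · exact hmaI
    · exact hmbI
  have hIsup : I = Jab K a b ⊔ Ideal.span {mono K c d} := by
    rw [hIdef, Jab, ← Ideal.span_union]
    congr 1
    ext x
    simp only [Set.mem_union, Set.mem_insert_iff, Set.mem_singleton_iff]
    tauto
  -- upper bound: I^e = J I^(e-1)
  have hupper : I ^ (e - 1 + 1) = Jab K a b * I ^ (e - 1) := by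
    have hee : e - 1 + 1 = e := by omega
    apply le_antisymm
    · have hCe : (Ideal.span {mono K c d} : Ideal (MvPolynomial (Fin 2) K)) ^ (e - 1 + 1) ≤
          Jab K a b * I ^ (e - 1) := by
        rw [hee, Ideal.span_singleton_pow, Ideal.span_le, Set.singleton_subset_iff]
        have hrw : mono K c d ^ e =
            mono K a 0 * ((mono K a 0) ^ (s - 1) * (mono K 0 b) ^ (e - s)) := by
          rw [mono_pow, hec, hed, mono_pow, mono_pow, mono_mul, mono_mul]
          congr 1
          · have hs' : s = (s - 1) + 1 := by omega
            rw [mul_zero, add_zero]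
            conv_lhs => rw [hs']
            ring
          · simp
        rw [SetLike.mem_coe, hrw]
        have hpw : I ^ (e - 1) = I ^ (s - 1) * I ^ (e - s) := by
          rw [← pow_add]
          congr 1
          omega
        rw [hpw]
        have hmaJ : mono K a 0 ∈ Jab K a b := by
          rw [Jab]; exact Ideal.subset_span (by simp)
        exact Ideal.mul_mem_mul hmaJ
          (Ideal.mul_mem_mul (Ideal.pow_mem_pow hmaI _) (Ideal.pow_mem_pow hmbI _))
      calc I ^ (e - 1 + 1) ≤ Jab K a b * I ^ (e - 1) ⊔
            (Ideal.span {mono K c d}) ^ (e - 1 + 1) := by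
            conv_lhs => rw [hIsup]
            refine le_trans (pow_le_sup' _ _ _) ?_
            rw [← hIsup]
            try exact le_rfl
      _ ≤ Jab K a b * I ^ (e - 1) := sup_le le_rfl hCe
    · rw [pow_succ']
      exact Ideal.mul_mono_left hJI
  -- lower bound
  have hlower : ∀ r : ℕ, r + 1 < e → I ^ (r + 1) ≠ Jab K a b * I ^ r := by
    intro r hr heq
    classical
    have hmem : mono K c d ^ (r + 1) ∈ I ^ (r + 1) := Ideal.pow_mem_pow hmcdI _
    rw [heq] at hmem
    have hmem2 := JI_le K a b c d r hmem
    rw [mono_pow, mono_eq, mem_ideal_span_monomial_image] at hmem2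
    have hsup : (monomial (nuu ((r + 1) * c) ((r + 1) * d)) (1 : K)).support =
        {nuu ((r + 1) * c) ((r + 1) * d)} := by
      rw [support_monomial, if_neg one_ne_zero]
    obtain ⟨t, ht, hle⟩ := hmem2 _ (by rw [hsup]; exact Finset.mem_singleton_self _)
    obtain ⟨i, j, l, hsum, hij, rfl⟩ := ht
    have h0 := hle 0
    have h1' := hle 1
    rw [nuu_apply0, nuu_apply0] at h0
    rw [nuu_apply1, nuu_apply1] at h1'
    -- i*a + l*c ≤ (r+1)*c, j*b + l*d ≤ (r+1)*d
    have hia : i * a ≤ (i + j) * c := by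
      have : (r + 1) * c = (i + j) * c + l * c := by
        rw [← add_mul]; congr 1; omega
      omega
    have hjb : j * b ≤ (i + j) * d := by
      have : (r + 1) * d = (i + j) * d + l * d := by
        rw [← add_mul]; congr 1; omega
      omega
    have f1 : i * g ≤ (i + j) * k := by
      have hcalc : (i * g) * a' ≤ ((i + j) * k) * a' := by
        calc (i * g) * a' = i * a := by rw [ha']; ring
        _ ≤ (i + j) * c := hia
        _ = ((i + j) * k) * a' := by rw [hk]; ring
      exact Nat.le_of_mul_le_mul_right hcalc ha'pos
    have f2 : j * g ≤ (i + j) * (g - k) := by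
      have hcalc : (j * g) * b' ≤ ((i + j) * (g - k)) * b' := by
        calc (j * g) * b' = j * b := by rw [hb']; ring
        _ ≤ (i + j) * d := hjb
        _ = ((i + j) * (g - k)) * b' := by rw [hd']; ring
      exact Nat.le_of_mul_le_mul_right hcalc hb'pos
    have f3 : (i + j) * (g - k) + (i + j) * k = (i + j) * g := by
      rw [← Nat.mul_add, Nat.sub_add_cancel (le_of_lt hkg)]
    have f4 : (i + j) * g = i * g + j * g := by rw [add_mul]
    have hBE : (i + j) * k = i * g := by omega
    have hdvd2 : g ∣ (i + j) * k := ⟨i, by rw [hBE, mul_comm]⟩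
    have := hmin (i + j) (by omega) hdvd2
    omega
  -- compute the reduction number
  have hred : redNum K a b I = e - 1 := by
    rw [redNum]
    apply le_antisymm
    · exact Nat.sInf_le hupper
    · refine le_csInf ⟨e - 1, hupper⟩ ?_
      intro r hrP
      by_contra hlt
      push_neg at hlt
      exact hlower r (by omega) hrP
  rw [hred]
  constructor
  · intro hnd
    have hgne : g ≠ a := fun hq => hnd (hq ▸ hgb)
    have ha'2 : 2 ≤ a' := by
      by_contra h0
      push_neg at h0
      have h01 : a' = 1 := by omega
      rw [h01, mul_one] at ha'
      exact hgne ha'.symm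
    have h2g : 2 * g ≤ a := by
      rw [ha']
      calc 2 * g = g * 2 := by ring
      _ ≤ g * a' := Nat.mul_le_mul_left g ha'2
    have heg : e ≤ g := by
      rw [he]
      exact Nat.le_mul_of_pos_left e hδpos
    omega
  · intro habs
    have hea : e ∣ a := dvd_trans ⟨δ, by rw [he]; ring⟩ ⟨a', ha'⟩
    have hae : e ≤ a := Nat.le_of_dvd ha0 hea
    have he_eq : e = a - 1 := by omega
    have hd1 : e ∣ a - e := Nat.dvd_sub hea dvd_rfl
    have hae1 : a - e = 1 := by omega
    rw [hae1] at hd1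
    have := Nat.le_of_dvd one_pos hd1
    omega
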